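/- (Correctness of S-List-Unfold') Let f : α → β → β and z : β, and let g : β → Gen (Option (α × β)) be such that for every b : β, g b is a correct generator for the predicate P b := fun step => (step = none ∧ z = b) ∨ (∃ x b', step = some (x, b') ∧ f x b' = b) (i.e., ∀ b step, step ∈ ⟦g b⟧ ↔ P b step). Then for every b : β, List.unfold g b is a correct generator for the predicate fun xs => List.fold f z xs = b (i.e., ∀ xs, xs ∈ ⟦List.unfold g b⟧ ↔ List.fold f z xs = b). -/
import Mathlib


namespace PBT

inductive Gen : Type → Type 1 where
  | pure {α : Type} : α → Gen α
  | pick {α : Type} : Gen α → Gen α → Gen α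
  | bind {α β : Type} : Gen α → (α → Gen β) → Gen β
  | indexed {α : Type} : (ℕ → Gen (Option α)) → Gen α
  | assume {α : Type} : (b : Bool) → (b = true → Gen α) → Gen α

instance : Pure Gen := ⟨Gen.pure⟩
instance : Bind Gen := ⟨Gen.bind⟩

def Gen.support : {α : Type} → Gen α → Set α
  | _, .pure a' => {a | a = a'}
  | _, .pick x y => {a | a ∈ x.support ∨ a ∈ y.support}
  | _, .bind x f => {a | ∃ a', a' ∈ x.support ∧ a ∈ (f a').support}
  | _, .indexed f => {a | (∃ n, some a ∈ (f n).support) ∧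
      (∀ a' n, some a' ∈ (f n).support → some a' ∈ (f (n + 1)).support)}
  | _, .assume b k => {a | ∃ h : b = true, a ∈ (k h).support}

notation (priority := high) "⟦" g "⟧" => Gen.support g

def listFold {α β : Type} (f : α → β → β) (z : β) : List α → β
  | [] => z
  | x :: xs => f x (listFold f z xs)

def listUnfold.go {α β : Type} (g : β → Gen (Option (α × β))) : β → ℕ → Gen (Option (List α))
  | _, 0 => .pure none
  | b, fuel + 1 =>
    g b >>= fun step =>
      match step with
      | none => .pure (some [])
      | some (x, b') =>
        listUnfold.go g b' fuel >>= fun mxs =>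
          match mxs with
          | none => .pure none
          | some xs => .pure (some (x :: xs))

def listUnfold {α β : Type} (g : β → Gen (Option (α × β))) (b : β) : Gen (List α) :=
  .indexed (listUnfold.go g b)

theorem s_list_unfold_correct {α β : Type} (f : α → β → β) (z : β)
    (g : β → Gen (Option (α × β)))
    (hg : ∀ (b : β) (step : Option (α × β)),
      step ∈ ⟦g b⟧ ↔ (step = none ∧ z = b) ∨ ∃ x b', step = some (x, b') ∧ f x b' = b) :
    ∀ (b : β) (xs : List α), xs ∈ ⟦listUnfold g b⟧ ↔ listFold f z xs = b := by
  have go_mem : ∀ (fuel : ℕ) (b : β) (xs : List α),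
      some xs ∈ ⟦listUnfold.go g b fuel⟧ ↔ (listFold f z xs = b ∧ xs.length < fuel) := by
    intro fuel
    induction fuel with
    | zero =>
      intro b xs
      simp [listUnfold.go, Gen.support, Set.mem_setOf_eq]
    | succ n ih =>
      intro b xs
      constructor
      · rintro ⟨step, hstep, hmem⟩
        rcases (hg b step).mp hstep with ⟨rfl, rfl⟩ | ⟨x, b', rfl, rfl⟩
        · simp only [Gen.support, Set.mem_setOf_eq, Option.some.injEq] at hmem
          subst hmem
          simp [listFold]
        · rcases hmem with ⟨mxs, hmxs, hmem2⟩
          rcases mxs with _ | xs'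
          · simp [Gen.support, Set.mem_setOf_eq] at hmem2
          · simp only [Gen.support, Set.mem_setOf_eq, Option.some.injEq] at hmem2
            subst hmem2
            rcases (ih b' xs').mp hmxs with ⟨hfold, hlen⟩
            refine ⟨by simp [listFold, hfold], by simpa using Nat.succ_lt_succ hlen⟩
      · rintro ⟨hfold, hlen⟩
        cases xs with
        | nil =>
          refine ⟨none, (hg b none).mpr (Or.inl ⟨rfl, by simpa [listFold] using hfold⟩), ?_⟩
          simp [Gen.support, Set.mem_setOf_eq]
        | cons x xs' =>
          refine ⟨some (x, listFold f z xs'),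
            (hg b _).mpr (Or.inr ⟨x, listFold f z xs', rfl, by simpa [listFold] using hfold⟩), ?_⟩
          refine ⟨some xs', (ih _ xs').mpr ⟨rfl, by simpa using Nat.lt_of_succ_lt_succ hlen⟩, ?_⟩
          simp [Gen.support, Set.mem_setOf_eq]
  intro b xs
  constructor
  · rintro ⟨⟨n, hn⟩, _⟩
    exact ((go_mem n b xs).mp hn).1
  · intro hfold
    refine ⟨⟨xs.length + 1, (go_mem _ b xs).mpr ⟨hfold, Nat.lt_succ_self _⟩⟩, ?_⟩
    intro xs' n h
    rcases (go_mem n b xs').mp h with ⟨h1, h2⟩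
    exact (go_mem (n + 1) b xs').mpr ⟨h1, Nat.lt_succ_of_lt h2⟩

end PBT
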